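/- Let A be a skew brace and I an ideal of A. Then [I,A]_RadRng, the additive subgroup generated by all right distributors [a,b,c], [c,a,b], [b,c,a] and commutators a+b-a-b for a ∈ I and b,c ∈ A, is an ideal of A. -/
import Mathlib


/-- A skew brace: a type with an additive group structure and a second group
operation `circ` (with inverse `cinv` and the same identity `0`) satisfying the
skew brace compatibility law `a ∘ (b + c) = a ∘ b - a + a ∘ c`. -/
class SkewBrace (A : Type*) extends AddGroup A where
  circ : A → A → A
  cinv : A → A
  circ_assoc : ∀ a b c : A, circ (circ a b) c = circ a (circ b c)
  zero_circ : ∀ a : A, circ 0 a = a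
  circ_zero : ∀ a : A, circ a 0 = a
  cinv_circ : ∀ a : A, circ (cinv a) a = 0
  circ_cinv : ∀ a : A, circ a (cinv a) = 0
  compat : ∀ a b c : A, circ a (b + c) = circ a b - a + circ a c

namespace SkewBrace

variable {A : Type*} [SkewBrace A]

/-- The star operation `a * b = -a + a ∘ b - b`. -/
def star (a b : A) : A := -a + circ a b - b

/-- The right distributor `[a,b,c] = (a+b)∘c - b∘c + c - a∘c`. -/
def rd (a b c : A) : A := circ (a + b) c - circ b c + c - circ a c

/-- An ideal of a skew brace: a normal additive subgroup closed under the
star operation on both sides. -/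
def IsIdeal (I : AddSubgroup A) : Prop :=
  (∀ a : A, ∀ x ∈ I, a + x - a ∈ I) ∧
  (∀ a : A, ∀ x ∈ I, star a x ∈ I) ∧
  (∀ a : A, ∀ x ∈ I, star x a ∈ I)

/-- `Z_R(A)`: additively central elements annihilating all right distributors. -/
def ZR (A : Type*) [SkewBrace A] : Set A :=
  {z | (∀ a : A, z + a = a + z) ∧ ∀ b c : A, rd z b c = 0 ∧ rd b z c = 0 ∧ rd b c z = 0}

end SkewBrace

open SkewBrace

section Infra
variable {A : Type*} [SkewBrace A]

/-- `lam a x = -a + a∘x`. -/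
private def lam (a x : A) : A := -a + circ a x

private lemma circ_eq_lam (a x : A) : circ a x = a + lam a x := by
  simp [lam]

private lemma lam_add (a x y : A) : lam a (x + y) = lam a x + lam a y := by
  simp [lam, SkewBrace.compat, sub_eq_add_neg, add_assoc]

private lemma lam_zero (a : A) : lam a 0 = 0 := by simp [lam, SkewBrace.circ_zero]

private lemma zero_lam (x : A) : lam 0 x = x := by simp [lam, SkewBrace.zero_circ]

private lemma lam_neg (a x : A) : lam a (-x) = -lam a x := by
  have h := lam_add a x (-x)
  rw [add_neg_cancel, lam_zero] at h
  exact (eq_neg_of_add_eq_zero_right h.symm)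

private lemma star_eq (a x : A) : star a x = lam a x - x := by
  simp [SkewBrace.star, lam, sub_eq_add_neg, add_assoc]

private lemma lam_eq_star (a x : A) : lam a x = star a x + x := by
  simp [star_eq]

private lemma lam_circ (a x y : A) : lam a (circ x y) = lam a x + lam (circ a x) y := by
  simp [lam, ← SkewBrace.circ_assoc, add_assoc]

private lemma circ_star (x a : A) : circ x a = x + star x a + a := by
  simp [SkewBrace.star, sub_eq_add_neg, add_assoc]

private lemma star_zero' (a : A) : star a 0 = 0 := by
  simp [SkewBrace.star, SkewBrace.circ_zero]

private lemma zero_star (a : A) : star 0 a = 0 := by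
  simp [SkewBrace.star, SkewBrace.zero_circ, sub_eq_add_neg]

section Ideal
variable {I : AddSubgroup A} (hI : IsIdeal I)
include hI

private lemma lam_mem (a : A) {x : A} (hx : x ∈ I) : lam a x ∈ I := by
  rw [lam_eq_star]; exact add_mem (hI.2.1 a x hx) hx

private lemma neg_conj_mem (a : A) {x : A} (hx : x ∈ I) : -a + x + a ∈ I := by
  have := hI.1 (-a) x hx
  simpa [sub_eq_add_neg] using this

private lemma shift_mem {x y : A} (h : x - y ∈ I) : -y + x ∈ I := by
  have : -y + (x - y) + y ∈ I := neg_conj_mem hI y h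
  simpa [sub_eq_add_neg, add_assoc] using this

private lemma C1 {x y : A} (a : A) (h : x - y ∈ I) : circ a x - circ a y ∈ I := by
  have hi : -y + x ∈ I := shift_mem hI h
  have hxy : x = y + (-y + x) := by simp
  have e : circ a x - circ a y = circ a y + lam a (-y + x) - circ a y := by
    conv_lhs => rw [hxy, SkewBrace.compat]
    simp [lam, sub_eq_add_neg, add_assoc]
  rw [e]; exact hI.1 _ _ (lam_mem hI a hi)

private lemma cinv_mem {x : A} (hx : x ∈ I) : cinv x ∈ I := by
  have h1 : star x (cinv x) = -x - cinv x := by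
    simp [SkewBrace.star, SkewBrace.circ_cinv, sub_eq_add_neg]
  have h2 : cinv x = -(star x (cinv x)) - x := by
    rw [h1]; simp
  rw [h2]
  exact sub_mem (neg_mem (hI.2.2 (cinv x) x hx)) hx

private lemma C2 {x y : A} (a : A) (h : x - y ∈ I) : circ x a - circ y a ∈ I := by
  have hi : -y + x ∈ I := shift_mem hI h
  have hxy : x = y + (-y + x) := by simp
  have hj : circ (cinv y) x ∈ I := by
    have e : circ (cinv y) x = lam (cinv y) (-y + x) := by
      conv_lhs => rw [hxy, SkewBrace.compat, SkewBrace.cinv_circ]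
      simp [lam]
    rw [e]; exact lam_mem hI _ hi
  set j := circ (cinv y) x with hjdef
  have hx2 : x = circ y j := by
    rw [hjdef, ← SkewBrace.circ_assoc, SkewBrace.circ_cinv, SkewBrace.zero_circ]
  have hi2 : j + star j a ∈ I := add_mem hj (hI.2.2 a j hj)
  have hja : circ j a = (j + star j a) + a := by
    simp [SkewBrace.star, sub_eq_add_neg, add_assoc]
  have e1 : circ x a - circ y a = y + lam y (j + star j a) - y := by
    conv_lhs => rw [hx2, SkewBrace.circ_assoc, hja, SkewBrace.compat]
    rw [circ_eq_lam y (j + star j a)]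
    simp [sub_eq_add_neg, add_assoc]
  rw [e1]; exact hI.1 _ _ (lam_mem hI y hi2)

end Ideal

end Infra

section Main
variable {A : Type*} [SkewBrace A]

private def SS (I : AddSubgroup A) : Set A :=
  {x : A | ∃ a b c : A, (a ∈ I ∨ b ∈ I ∨ c ∈ I) ∧ x = rd a b c} ∪
  {x : A | ∃ a ∈ I, ∃ b : A, x = a + b - a - b}

private def JJ (I : AddSubgroup A) : AddSubgroup A := AddSubgroup.closure (SS I)

private lemma rd_mem_J (I : AddSubgroup A) {a b c : A} (h : a ∈ I ∨ b ∈ I ∨ c ∈ I) :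
    rd a b c ∈ JJ I :=
  AddSubgroup.subset_closure (Or.inl ⟨a, b, c, h, rfl⟩)

private lemma comm_mem_J (I : AddSubgroup A) {a : A} (ha : a ∈ I) (b : A) :
    a + b - a - b ∈ JJ I :=
  AddSubgroup.subset_closure (Or.inr ⟨a, ha, b, rfl⟩)

variable {I : AddSubgroup A} (hI : IsIdeal I)
include hI

private lemma genI : SS I ⊆ (I : Set A) := by
  rintro x (⟨a, b, c, h, rfl⟩ | ⟨a, ha, b, rfl⟩)
  · rcases h with ha | hb | hc
    · have h1 : circ (a + b) c - circ b c ∈ I := C2 hI c (by simpa using ha)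
      have h2 : c - circ a c ∈ I := by
        have := C2 hI c (show a - 0 ∈ I by simpa using ha)
        rw [SkewBrace.zero_circ] at this
        simpa using neg_mem this
      have e : rd a b c = (circ (a + b) c - circ b c) + (c - circ a c) := by
        simp [rd, sub_eq_add_neg, add_assoc]
      rw [e]; exact add_mem h1 h2
    · have huw : circ (a + b) c - circ a c ∈ I := by
        refine C2 hI c ?_
        have : a + b - a ∈ I := hI.1 a b hb
        simpa [sub_eq_add_neg] using this
      have hvc : -(circ b c) + c ∈ I := by
        have h0 : circ b c - c ∈ I := by
          have := C2 hI c (show b - 0 ∈ I by simpa using hb)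
          rwa [SkewBrace.zero_circ] at this
        simpa [neg_add_rev] using neg_mem (shift_mem hI h0)
      have e : rd a b c = (circ (a + b) c - circ a c) +
          (circ a c + (-(circ b c) + c) - circ a c) := by
        simp [rd, sub_eq_add_neg, add_assoc]
      rw [e]; exact add_mem huw (hI.1 _ _ hvc)
    · have h1 : circ (a + b) c - (a + b) ∈ I := by
        have := C1 hI (a + b) (show c - 0 ∈ I by simpa using hc)
        rwa [SkewBrace.circ_zero] at this
      have h2 : circ b c - b ∈ I := by
        have := C1 hI b (show c - 0 ∈ I by simpa using hc)
        rwa [SkewBrace.circ_zero] at this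
      have h3 : circ a c - a ∈ I := by
        have := C1 hI a (show c - 0 ∈ I by simpa using hc)
        rwa [SkewBrace.circ_zero] at this
      have e : rd a b c = (circ (a + b) c - (a + b)) +
          (a + (-(circ b c - b) + c) - a) + (-(circ a c - a)) := by
        simp [rd, sub_eq_add_neg, add_assoc, neg_add_rev]
      rw [e]
      exact add_mem (add_mem h1 (hI.1 _ _ (add_mem (neg_mem h2) hc))) (neg_mem h3)
  · have e : a + b - a - b = a - (b + a - b) := by
      simp [sub_eq_add_neg, add_assoc, neg_add_rev]
    rw [e]; exact sub_mem ha (hI.1 b a ha)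

private lemma J_le_I : JJ I ≤ I := by
  rw [JJ, AddSubgroup.closure_le]; exact genI hI

private lemma J_norm (g x : A) (hx : x ∈ JJ I) : g + x - g ∈ JJ I := by
  have hxI : x ∈ I := J_le_I hI hx
  have hc : (-x) + g - (-x) - g ∈ JJ I := comm_mem_J I (neg_mem hxI) g
  have e : g + x - g = x + ((-x) + g - (-x) - g) := by
    simp [sub_eq_add_neg, add_assoc]
  rw [e]; exact add_mem hx hc

private lemma J_normal : (JJ I).Normal := by
  constructor
  intro n hn g
  simpa [sub_eq_add_neg] using J_norm hI g n hn

end Main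

section QuotSec
variable {A : Type*} [SkewBrace A] (I : AddSubgroup A) [(JJ I).Normal]

private def qh : A →+ A ⧸ JJ I := QuotientAddGroup.mk' _

variable {I}

private lemma q_zero {x : A} (hx : x ∈ JJ I) : qh I x = 0 := by
  rw [qh, QuotientAddGroup.mk'_apply]
  exact (QuotientAddGroup.eq_zero_iff x).mpr hx

private lemma q_surj : Function.Surjective (qh I) := QuotientAddGroup.mk'_surjective _

private lemma q_eq_of_sub_mem {x y : A} (h : x - y ∈ JJ I) : qh I x = qh I y := by
  have := q_zero h
  rw [map_sub, sub_eq_zero] at this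
  exact this

/-- images of `I` are central in the quotient -/
private lemma cent {x : A} (hx : x ∈ I) (u : A ⧸ JJ I) : qh I x + u = u + qh I x := by
  obtain ⟨g, rfl⟩ := q_surj u
  rw [← map_add, ← map_add]
  apply q_eq_of_sub_mem
  have e : (x + g) - (g + x) = x + g - x - g := by
    simp [sub_eq_add_neg, add_assoc, neg_add_rev]
  rw [e]; exact comm_mem_J I hx g

/-- move a central element to the right -/
private lemma solve4 {G : Type*} [AddGroup G] {a b c d : G} (h : a - b + c - d = 0) :
    a = d - c + b := by
  have h1 : a - b + c = d := by rwa [sub_eq_zero] at h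
  rw [← h1]; simp [sub_eq_add_neg, add_assoc]

private lemma rd_rel {x y z : A} (h : rd x y z ∈ JJ I) :
    qh I (circ (x + y) z) = qh I (circ x z) - qh I z + qh I (circ y z) := by
  have h0 : qh I (rd x y z) = 0 := q_zero h
  rw [rd] at h0
  simp only [map_sub, map_add] at h0
  exact solve4 h0

private lemma cent_neg {x : A} (hx : x ∈ I) (u : A ⧸ JJ I) :
    -qh I x + u = u + -qh I x := by
  have h := cent (x := x) hx (-u)
  have := congrArg Neg.neg h
  simpa [neg_add_rev] using this.symm

private lemma cent_star {x : A} (hI : IsIdeal I) (hx : x ∈ I) (a : A) (u : A ⧸ JJ I) :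
    qh I (SkewBrace.star x a) + u = u + qh I (SkewBrace.star x a) :=
  cent (hI.2.2 a x hx) u

end QuotSec

private lemma cmove {G : Type*} [AddGroup G] {c : G} (hc : ∀ u, c + u = u + c) (x r : G) :
    c + (x + r) = x + (c + r) := by rw [← add_assoc, hc x, add_assoc]

section RhoSec
variable {A : Type*} [SkewBrace A] {I : AddSubgroup A} [(JJ I).Normal] (hI : IsIdeal I)
include hI

omit hI [(JJ I).Normal] in
/-- (iii): key identity for left-splitting of star. -/
private lemma idenIII (x y a : A) :
    SkewBrace.star (x + y) a =
      -y + (-x + rd x y a + x) + SkewBrace.star x a + y + SkewBrace.star y a := by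
  simp [SkewBrace.star, rd, sub_eq_add_neg, add_assoc, neg_add_rev]

private lemma Lplus {i : A} (hi : i ∈ I) (y a : A) :
    qh I (SkewBrace.star (i + y) a) =
      qh I (SkewBrace.star i a) + qh I (SkewBrace.star y a) := by
  have h0 : qh I (rd i y a) = 0 := q_zero (rd_mem_J I (Or.inl hi))
  rw [idenIII i y a]
  simp only [map_add, map_neg, h0, add_zero, neg_add_cancel, zero_add]
  have hc := cent_star (x := i) hI hi a
  simp only [cmove hc, hc, add_assoc]
  simp

private lemma Rplus {i : A} (hi : i ∈ I) (y a : A) :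
    qh I (SkewBrace.star (y + i) a) =
      qh I (SkewBrace.star y a) + qh I (SkewBrace.star i a) := by
  have h1 : qh I (circ (y + i) a) = qh I (circ y a) - qh I a + qh I (circ i a) :=
    rd_rel (rd_mem_J I (Or.inr (Or.inl hi)))
  have e : SkewBrace.star (y + i) a = -i + (-y + (circ (y + i) a + -a)) := by
    simp [SkewBrace.star, sub_eq_add_neg, add_assoc, neg_add_rev]
  rw [e]
  simp only [map_add, map_neg, h1]
  have hc := cent_neg (I := I) (x := i) hi
  simp only [SkewBrace.star, map_add, map_neg, map_sub, sub_eq_add_neg, add_assoc,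
    neg_add_rev]
  simp only [cmove hc, hc, add_assoc]

omit hI in
private lemma rho_zero (a : A) : qh I (SkewBrace.star 0 a) = 0 := by
  rw [zero_star]; exact map_zero _

private lemma rho_neg {i : A} (hi : i ∈ I) (a : A) :
    qh I (SkewBrace.star (-i) a) = -qh I (SkewBrace.star i a) := by
  have h := Lplus hI hi (-i) a
  rw [add_neg_cancel, rho_zero] at h
  exact (eq_neg_of_add_eq_zero_right h.symm)

private lemma rho_conj {i : A} (hi : i ∈ I) (y a : A) :
    qh I (SkewBrace.star (y + i - y) a) = qh I (SkewBrace.star i a) := by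
  have hi' : y + i - y ∈ I := hI.1 y i hi
  have h3 : qh I (SkewBrace.star ((y + i - y) + y) a) =
      qh I (SkewBrace.star (y + i - y) a) + qh I (SkewBrace.star y a) := Lplus hI hi' y a
  rw [sub_add_cancel] at h3
  rw [Rplus hI hi y a] at h3
  have h4 : qh I (SkewBrace.star y a) + qh I (SkewBrace.star i a) =
      qh I (SkewBrace.star i a) + qh I (SkewBrace.star y a) :=
    (cent_star hI hi a _).symm
  rw [h4] at h3
  exact (add_right_cancel h3).symm

omit hI in
private lemma ncent {G : Type*} [AddGroup G] {c : G} (hc : ∀ u, c + u = u + c) (u : G) :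
    -c + u = u + -c := by
  have h := hc (-u)
  have := congrArg Neg.neg h
  simpa [neg_add_rev] using this.symm

/-- centrality of `q (lam x i)` for `i ∈ I` -/
private lemma cent_lam {i : A} (hi : i ∈ I) (x : A) (u : A ⧸ JJ I) :
    qh I (lam x i) + u = u + qh I (lam x i) :=
  cent (lam_mem hI x hi) u

omit hI [(JJ I).Normal] in
private lemma lam_sub (a x y : A) : lam a (x - y) = lam a x - lam a y := by
  rw [sub_eq_add_neg, lam_add, lam_neg, sub_eq_add_neg]

/-- ♥ : `q (lam (i+y) d) = q (star i d) + q (lam y d)` for `i ∈ I` -/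
private lemma LamHeart {i : A} (hi : i ∈ I) (y d : A) :
    qh I (lam (i + y) d) = qh I (SkewBrace.star i d) + qh I (lam y d) := by
  have h1 : qh I (circ (i + y) d) = qh I (circ i d) - qh I d + qh I (circ y d) :=
    rd_rel (rd_mem_J I (Or.inl hi))
  have e : lam (i + y) d = -y + (-i + circ (i + y) d) := by
    simp [lam, sub_eq_add_neg, add_assoc, neg_add_rev]
  have e2 : circ i d = i + (SkewBrace.star i d + d) := by
    rw [circ_star]; simp [add_assoc]
  have e3 : circ y d = y + lam y d := circ_eq_lam y d
  rw [e]
  simp only [map_add, map_neg, h1, sub_eq_add_neg, add_assoc, e2, e3]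
  have hc := cent_star hI hi d
  simp only [cmove hc, hc, add_assoc]
  simp [add_assoc]

/-- ♥' : `q (lam (y+i) d) = q (lam y d) + q (star i d)` for `i ∈ I` -/
private lemma LamHeart' {i : A} (hi : i ∈ I) (y d : A) :
    qh I (lam (y + i) d) = qh I (lam y d) + qh I (SkewBrace.star i d) := by
  have h1 : qh I (circ (y + i) d) = qh I (circ y d) - qh I d + qh I (circ i d) :=
    rd_rel (rd_mem_J I (Or.inr (Or.inl hi)))
  have e : lam (y + i) d = -i + (-y + circ (y + i) d) := by
    simp [lam, sub_eq_add_neg, add_assoc, neg_add_rev]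
  have e2 : circ i d = i + (SkewBrace.star i d + d) := by
    rw [circ_star]; simp [add_assoc]
  have e3 : circ y d = y + lam y d := circ_eq_lam y d
  rw [e]
  simp only [map_add, map_neg, h1, sub_eq_add_neg, add_assoc, e2, e3]
  have hci := cent hi
  have hcni := ncent hci
  have hc := cent_star hI hi d
  simp only [cmove hcni, hcni, add_assoc]
  simp only [cmove hci, hci, add_assoc]
  simp only [cmove hc, hc, add_assoc]
  simp [add_assoc]

/-- ♦ : `q (lam (x+y) i) = q (lam x i) + (q (lam y i) + -q i)` for `i ∈ I` -/
private lemma LamDiamond {i : A} (hi : i ∈ I) (x y : A) :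
    qh I (lam (x + y) i) = qh I (lam x i) + (qh I (lam y i) + -qh I i) := by
  have h1 : qh I (circ (x + y) i) = qh I (circ x i) - qh I i + qh I (circ y i) :=
    rd_rel (rd_mem_J I (Or.inr (Or.inr hi)))
  have e : lam (x + y) i = -y + (-x + circ (x + y) i) := by
    simp [lam, sub_eq_add_neg, add_assoc, neg_add_rev]
  have e2 : circ x i = x + lam x i := circ_eq_lam x i
  have e3 : circ y i = y + lam y i := circ_eq_lam y i
  rw [e]
  simp only [map_add, map_neg, h1, sub_eq_add_neg, add_assoc, e2, e3]
  have hc1 := cent_lam hI hi x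
  have hc2 := cent_lam hI hi y
  have hci := cent hi
  have hcni := ncent hci
  simp only [cmove hc1, hc1, add_assoc]
  simp only [cmove hc2, hc2, add_assoc]
  simp only [cmove hcni, hcni, add_assoc]
  simp [add_assoc]

/-- `q (lam (-a) i) = -q (lam a i) + (q i + q i)` for `i ∈ I` -/
private lemma mu_neg {i : A} (hi : i ∈ I) (a : A) :
    qh I (lam (-a) i) = -qh I (lam a i) + (qh I i + qh I i) := by
  have h := LamDiamond hI hi a (-a)
  rw [add_neg_cancel, zero_lam] at h
  have h2 : -qh I (lam a i) + qh I i = qh I (lam (-a) i) + -qh I i := by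
    conv_lhs => rw [h]
    simp [add_assoc]
  calc qh I (lam (-a) i) = qh I (lam (-a) i) + -qh I i + qh I i := by simp [add_assoc]
    _ = -qh I (lam a i) + qh I i + qh I i := by rw [← h2]
    _ = -qh I (lam a i) + (qh I i + qh I i) := by rw [add_assoc]

omit hI [(JJ I).Normal] in
private lemma circ_neg (a x : A) : circ a (-x) = a - circ a x + a := by
  have h := SkewBrace.compat a x (-x)
  rw [add_neg_cancel, SkewBrace.circ_zero] at h
  have h2 := congrArg (fun z => -(circ a x - a) + z) h
  simp only [neg_add_cancel_left] at h2
  rw [← h2, neg_sub]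

omit hI [(JJ I).Normal] in
/-- expansion of `lam a (rd b c d)` -/
private lemma idenMu (a b c d : A) :
    lam a (rd b c d) = lam a b + (lam a c + (lam (circ a (b + c)) d +
      (-(lam (circ a c) d) + (-(lam a c) + (lam a d +
      (-(lam (circ a b) d) + -(lam a b))))))) := by
  simp [rd, lam_sub, lam_add, lam_neg, lam_circ, sub_eq_add_neg, add_assoc, neg_add_rev]

private lemma AmuB {b : A} (hb : b ∈ I) (a c d : A) :
    qh I (lam a (rd b c d)) = 0 := by
  have hi8 : circ a b + -a ∈ I := by
    have := C1 hI a (show b - 0 ∈ I by simpa using hb)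
    rw [SkewBrace.circ_zero] at this
    simpa [sub_eq_add_neg] using this
  have hab : circ a b = (circ a b + -a) + a := by simp
  have habc : circ a (b + c) = (circ a b + -a) + circ a c := by
    rw [SkewBrace.compat, sub_eq_add_neg]
  have r1 : qh I (lam (circ a (b + c)) d) =
      qh I (SkewBrace.star (circ a b + -a) d) + qh I (lam (circ a c) d) := by
    rw [habc]; exact LamHeart hI hi8 _ d
  have r2 : qh I (lam (circ a b) d) =
      qh I (SkewBrace.star (circ a b + -a) d) + qh I (lam a d) := by
    conv_lhs => rw [hab]
    exact LamHeart hI hi8 a d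
  rw [idenMu]
  simp only [map_add, map_neg, r1, r2, neg_add_rev, neg_neg, add_assoc]
  have hK := cent_star hI hi8 d
  have hKn := ncent hK
  have hQb := cent_lam hI hb a
  have hQbn := ncent hQb
  simp only [cmove hK, hK, add_assoc]
  simp only [cmove hKn, hKn, add_assoc]
  simp only [cmove hQb, hQb, add_assoc]
  simp only [cmove hQbn, hQbn, add_assoc]
  simp [add_assoc]

private lemma AmuC {c : A} (hc : c ∈ I) (a b d : A) :
    qh I (lam a (rd b c d)) = 0 := by
  have hlac : lam a c ∈ I := lam_mem hI a hc
  have habc : circ a (b + c) = circ a b + lam a c := by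
    rw [SkewBrace.compat, lam, sub_eq_add_neg, add_assoc]
  have hac : circ a c = a + lam a c := circ_eq_lam a c
  have r1 : qh I (lam (circ a (b + c)) d) =
      qh I (lam (circ a b) d) + qh I (SkewBrace.star (lam a c) d) := by
    rw [habc]; exact LamHeart' hI hlac _ d
  have r2 : qh I (lam (circ a c) d) =
      qh I (lam a d) + qh I (SkewBrace.star (lam a c) d) := by
    rw [hac]; exact LamHeart' hI hlac a d
  rw [idenMu]
  simp only [map_add, map_neg, r1, r2, neg_add_rev, neg_neg, add_assoc]
  have hK := cent_star hI hlac d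
  have hKn := ncent hK
  have hQc := cent_lam hI hc a
  have hQcn := ncent hQc
  simp only [cmove hK, hK, add_assoc]
  simp only [cmove hKn, hKn, add_assoc]
  simp only [cmove hQc, hQc, add_assoc]
  simp only [cmove hQcn, hQcn, add_assoc]
  simp [add_assoc]

private lemma AmuD {d : A} (hd : d ∈ I) (a b c : A) :
    qh I (lam a (rd b c d)) = 0 := by
  have habc : circ a (b + c) = (circ a b + -a) + circ a c := by
    rw [SkewBrace.compat, sub_eq_add_neg]
  have r1 : qh I (lam (circ a (b + c)) d) =
      qh I (lam (circ a b + -a) d) + (qh I (lam (circ a c) d) + -qh I d) := by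
    rw [habc]; exact LamDiamond hI hd _ _
  have r2 : qh I (lam (circ a b + -a) d) =
      qh I (lam (circ a b) d) + (qh I (lam (-a) d) + -qh I d) :=
    LamDiamond hI hd _ _
  have r3 : qh I (lam (-a) d) = -qh I (lam a d) + (qh I d + qh I d) :=
    mu_neg hI hd a
  rw [idenMu]
  simp only [map_add, map_neg, r1, r2, r3, neg_add_rev, neg_neg, add_assoc]
  have h1 := cent_lam hI hd (circ a b); have h1n := ncent h1
  have h2 := cent_lam hI hd (circ a c); have h2n := ncent h2
  have h3 := cent_lam hI hd a; have h3n := ncent h3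
  have h4 := cent hd; have h4n := ncent h4
  simp only [cmove h1, h1, add_assoc]
  simp only [cmove h1n, h1n, add_assoc]
  simp only [cmove h2, h2, add_assoc]
  simp only [cmove h2n, h2n, add_assoc]
  simp only [cmove h3, h3, add_assoc]
  simp only [cmove h3n, h3n, add_assoc]
  simp only [cmove h4, h4, add_assoc]
  simp only [cmove h4n, h4n, add_assoc]
  simp [add_assoc]

private lemma Acomm {i : A} (hi : i ∈ I) (a g : A) :
    qh I (lam a (i + g - i - g)) = 0 := by
  have e : lam a (i + g - i - g) =
      lam a i + (lam a g + (-(lam a i) + -(lam a g))) := by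
    simp [lam_sub, lam_add, lam_neg, sub_eq_add_neg, add_assoc]
  rw [e]
  simp only [map_add, map_neg, add_assoc]
  have h1 := cent_lam hI hi a; have h1n := ncent h1
  simp only [cmove h1, h1, add_assoc]
  simp only [cmove h1n, h1n, add_assoc]
  simp [add_assoc]

omit hI in
private lemma mem_of_q_zero {x : A} (h : qh I x = 0) : x ∈ JJ I := by
  rw [qh, QuotientAddGroup.mk'_apply] at h
  exact (QuotientAddGroup.eq_zero_iff x).mp h

private lemma SLbase (a : A) {s : A} (hs : s ∈ SS I) : SkewBrace.star a s ∈ JJ I := by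
  have hs' : qh I s = 0 := q_zero (AddSubgroup.subset_closure hs)
  have hq : qh I (lam a s) = 0 := by
    rcases hs with ⟨b, c, d, h, rfl⟩ | ⟨i, hi, g, rfl⟩
    · rcases h with hb | hc | hd
      · exact AmuB hI hb a c d
      · exact AmuC hI hc a b d
      · exact AmuD hI hd a b c
    · exact Acomm hI hi a g
  apply mem_of_q_zero (I := I)
  rw [star_eq, map_sub, hq, hs', sub_zero]

private lemma SL (a : A) {x : A} (hx : x ∈ JJ I) : SkewBrace.star a x ∈ JJ I := by
  refine AddSubgroup.closure_induction
    (p := fun y _ => SkewBrace.star a y ∈ JJ I) ?_ ?_ ?_ ?_ hx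
  · intro s hs; exact SLbase hI a hs
  · show SkewBrace.star a 0 ∈ JJ I
    rw [star_zero']; exact zero_mem _
  · intro x y _ _ ihx ihy
    show SkewBrace.star a (x + y) ∈ JJ I
    have e : SkewBrace.star a (x + y) =
        SkewBrace.star a x + (x + SkewBrace.star a y - x) := by
      simp [SkewBrace.star, SkewBrace.compat, sub_eq_add_neg, add_assoc, neg_add_rev]
    rw [e]; exact add_mem ihx (J_norm hI x _ ihy)
  · intro x _ ihx
    show SkewBrace.star a (-x) ∈ JJ I
    have e : SkewBrace.star a (-x) = -x + -(SkewBrace.star a x) + x := by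
      rw [SkewBrace.star, circ_neg]
      simp [SkewBrace.star, sub_eq_add_neg, add_assoc, neg_add_rev]
    rw [e]
    have := J_norm hI (-x) _ (neg_mem ihx)
    simpa [sub_eq_add_neg] using this

private lemma BrdB {b : A} (hb : b ∈ I) (c d a : A) :
    qh I (SkewBrace.star (rd b c d) a) = 0 := by
  have hp1 : circ (b + c) d - circ c d ∈ I := C2 hI d (by simpa using hb)
  have hp2 : d - circ b d ∈ I := by
    have := C2 hI d (show (0 : A) - b ∈ I by simpa using neg_mem hb)
    rwa [SkewBrace.zero_circ] at this
  have e_s : rd b c d = (circ (b + c) d - circ c d) + (d - circ b d) := by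
    simp [rd, sub_eq_add_neg, add_assoc]
  have hsq : qh I (rd b c d) = 0 := q_zero (rd_mem_J I (Or.inl hb))
  have hu : circ (b + c) d = (circ (b + c) d - circ c d) + circ c d := by simp
  have hd2 : d = (d - circ b d) + circ b d := by simp
  have hrU : qh I (SkewBrace.star (circ (b + c) d) a) =
      qh I (SkewBrace.star (circ (b + c) d - circ c d) a) +
      qh I (SkewBrace.star (circ c d) a) := by
    conv_lhs => rw [hu]
    exact Lplus hI hp1 _ a
  have hrD : qh I (SkewBrace.star d a) =
      qh I (SkewBrace.star (d - circ b d) a) + qh I (SkewBrace.star (circ b d) a) := by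
    conv_lhs => rw [hd2]
    exact Lplus hI hp2 _ a
  have hqu : qh I (circ (b + c) d) =
      qh I (circ (b + c) d - circ c d) + qh I (circ c d) := by
    conv_lhs => rw [hu]
    exact map_add _ _ _
  have hqd : qh I d = qh I (d - circ b d) + qh I (circ b d) := by
    conv_lhs => rw [hd2]
    exact map_add _ _ _
  have hstar : qh I (rd b c (circ d a)) = 0 := q_zero (rd_mem_J I (Or.inl hb))
  have e2 : rd b c (circ d a) = circ (circ (b + c) d) a - circ (circ c d) a +
      circ d a - circ (circ b d) a := by
    rw [rd, ← SkewBrace.circ_assoc, ← SkewBrace.circ_assoc, ← SkewBrace.circ_assoc]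
  have hcs : ∀ x : A, circ x a = x + (SkewBrace.star x a + a) := by
    intro x; rw [circ_star]; simp [add_assoc]
  rw [e2] at hstar
  simp only [hcs, map_add, map_neg, map_sub, sub_eq_add_neg, neg_add_rev, neg_neg,
    add_assoc] at hstar
  rw [hrU, hrD, hqu, hqd] at hstar
  have hc1 := cent_star hI hp1 a
  have hc2 := cent_star hI hp2 a
  simp only [cmove hc1, hc1, add_assoc] at hstar
  simp only [cmove hc2, hc2, add_assoc] at hstar
  simp only [neg_add_cancel_left, add_neg_cancel_left, add_neg_cancel, neg_add_cancel,
    add_zero, zero_add, add_assoc] at hstar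
  have hq12 : qh I (circ (b + c) d - circ c d) + qh I (d - circ b d) = 0 := by
    rw [← map_add, show (circ (b + c) d - circ c d) + (d - circ b d) = rd b c d
      from e_s.symm]
    exact hsq
  rw [e_s, Lplus hI hp1 _ a]
  rw [← add_assoc, hq12, zero_add] at hstar
  exact hstar

private lemma BrdC {c : A} (hc : c ∈ I) (b d a : A) :
    qh I (SkewBrace.star (rd b c d) a) = 0 := by
  set r1 : A := circ (b + c) d - circ b d with hr1d
  set r2 : A := -circ c d + d with hr2d
  have hr1 : r1 ∈ I := by
    rw [hr1d]; exact C2 hI d (by simpa [sub_eq_add_neg, add_assoc] using hI.1 b c hc)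
  have hr2 : r2 ∈ I := by
    rw [hr2d]
    apply shift_mem hI
    have := C2 hI d (show c - 0 ∈ I by simpa using hc)
    rw [SkewBrace.zero_circ] at this
    simpa using neg_mem this
  have hr3 : circ (b + c) d + r2 - circ (b + c) d ∈ I := hI.1 _ _ hr2
  have e_s : rd b c d = (circ (b + c) d + r2 - circ (b + c) d) + r1 := by
    rw [hr1d, hr2d]; simp [rd, sub_eq_add_neg, add_assoc]
  have hsq : qh I (rd b c d) = 0 := q_zero (rd_mem_J I (Or.inr (Or.inl hc)))
  -- hq21 : q r1 + q r2 = 0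
  have e_s2 : rd b c d = r1 + (circ b d + (r2 + -circ b d)) := by
    rw [hr1d, hr2d]; simp [rd, sub_eq_add_neg, add_assoc]
  have hq21 : qh I r1 + qh I r2 = 0 := by
    have h0 := hsq
    rw [e_s2] at h0
    simp only [map_add, map_neg, add_assoc] at h0
    have hcr2 := cent (x := r2) hr2
    simp only [cmove hcr2, hcr2, add_assoc] at h0
    simpa [add_assoc] using h0
  -- relations
  have hrU : qh I (SkewBrace.star (circ (b + c) d) a) =
      qh I (SkewBrace.star r1 a) + qh I (SkewBrace.star (circ b d) a) := by
    have h := Lplus hI hr1 (circ b d) a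
    rw [hr1d, sub_add_cancel] at h
    rw [hr1d]; exact h
  have hrD : qh I (SkewBrace.star d a) =
      qh I (SkewBrace.star (circ c d) a) + qh I (SkewBrace.star r2 a) := by
    have h := Rplus hI hr2 (circ c d) a
    rw [hr2d, add_neg_cancel_left] at h
    rw [hr2d]; exact h
  have hqu : qh I (circ (b + c) d) = qh I r1 + qh I (circ b d) := by
    have h := map_add (qh I) r1 (circ b d)
    rw [hr1d, sub_add_cancel] at h
    rw [hr1d]; exact h
  have hqd : qh I d = qh I (circ c d) + qh I r2 := by
    have h := map_add (qh I) (circ c d) r2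
    rw [hr2d, add_neg_cancel_left] at h
    rw [hr2d]; exact h
  have hstar : qh I (rd b c (circ d a)) = 0 := q_zero (rd_mem_J I (Or.inr (Or.inl hc)))
  have e2 : rd b c (circ d a) = circ (circ (b + c) d) a - circ (circ c d) a +
      circ d a - circ (circ b d) a := by
    rw [rd, ← SkewBrace.circ_assoc, ← SkewBrace.circ_assoc, ← SkewBrace.circ_assoc]
  have hcs : ∀ x : A, circ x a = x + (SkewBrace.star x a + a) := by
    intro x; rw [circ_star]; simp [add_assoc]
  rw [e2] at hstar
  simp only [hcs, map_add, map_neg, map_sub, sub_eq_add_neg, neg_add_rev, neg_neg,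
    add_assoc] at hstar
  rw [hrU, hrD, hqu, hqd] at hstar
  have hcρ1 := cent_star hI hr1 a
  have hcρ2 := cent_star hI hr2 a
  have hcq2 := cent (x := r2) hr2
  have hcq1 := cent (x := r1) hr1
  simp only [cmove hcρ1, hcρ1, add_assoc] at hstar
  simp only [cmove hcq2, hcq2, add_assoc] at hstar
  simp only [cmove hcρ2, hcρ2, add_assoc] at hstar
  simp only [neg_add_cancel_left, add_neg_cancel_left, add_neg_cancel, neg_add_cancel,
    add_zero, zero_add, add_assoc] at hstar
  simp only [cmove hcρ1, hcρ1, add_assoc] at hstar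
  -- now hstar : q r1 + (q r2 + (q (star r2 a) + q (star r1 a))) = 0 (hopefully)
  rw [e_s, Lplus hI hr3 _ a, rho_conj hI hr2 (circ (b + c) d) a]
  rw [← add_assoc, hq21, zero_add] at hstar
  exact hstar

/-- δ: for `d ∈ I`, `q (star (lam x d) a) = -q (lam x d) + q (lam x (circ d a + -a))` -/
private lemma deltaLem {d : A} (hd : d ∈ I) (x a : A) :
    qh I (SkewBrace.star (lam x d) a) =
      -qh I (lam x d) + qh I (lam x (circ d a + -a)) := by
  have hlxd : lam x d ∈ I := lam_mem hI x hd
  have hf : circ d a + -a ∈ I := by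
    have := C2 hI a (show d - 0 ∈ I by simpa using hd)
    rw [SkewBrace.zero_circ] at this
    simpa [sub_eq_add_neg] using this
  have h1 : qh I (circ (x + lam x d) a) =
      qh I (circ x a) - qh I a + qh I (circ (lam x d) a) :=
    rd_rel (rd_mem_J I (Or.inr (Or.inl hlxd)))
  rw [← circ_eq_lam x d, SkewBrace.circ_assoc] at h1
  rw [show circ d a = (circ d a + -a) + a by simp [add_assoc]] at h1
  rw [SkewBrace.compat, circ_eq_lam x (circ d a + -a)] at h1
  simp only [map_add, map_sub, map_neg, sub_eq_add_neg, add_assoc] at h1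
  have hcf := cent_lam hI hf x
  simp only [cmove hcf, hcf, add_assoc] at h1
  simp only [neg_add_cancel_left, add_neg_cancel_left, add_neg_cancel, neg_add_cancel,
    add_zero, zero_add, add_assoc] at h1
  -- h1 : qcxa + qlxf = qcxa + (-qa + qcea)
  have h3 := add_left_cancel h1
  have h4 : qh I a + qh I (lam x (circ d a + -a)) = qh I (circ (lam x d) a) := by
    rw [h3]; simp [add_assoc]
  simp only [SkewBrace.star, map_add, map_sub, map_neg, sub_eq_add_neg, add_assoc]
  rw [← h4]
  simp only [cmove hcf, hcf, add_assoc]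
  simp

set_option maxRecDepth 10000 in
private lemma BrdD {d : A} (hd : d ∈ I) (b c a : A) :
    qh I (SkewBrace.star (rd b c d) a) = 0 := by
  have he1 : lam (b + c) d ∈ I := lam_mem hI _ hd
  have he2 : lam c d ∈ I := lam_mem hI _ hd
  have he3 : lam b d ∈ I := lam_mem hI _ hd
  have hf : circ d a + -a ∈ I := by
    have := C2 hI a (show d - 0 ∈ I by simpa using hd)
    rw [SkewBrace.zero_circ] at this
    simpa [sub_eq_add_neg] using this
  have hi4 : lam (b + c) d + -lam c d ∈ I := add_mem he1 (neg_mem he2)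
  have hi5 : d + -lam b d ∈ I := add_mem hd (neg_mem he3)
  have e_s : rd b c d = ((b + c) + (lam (b + c) d + -lam c d) - (b + c)) +
      (b + (d + -lam b d) - b) := by
    simp only [rd, circ_eq_lam]
    simp [sub_eq_add_neg, add_assoc, neg_add_rev]
  rw [e_s, Lplus hI (hI.1 (b + c) _ hi4) _ a, rho_conj hI hi4 (b + c) a,
    rho_conj hI hi5 b a]
  rw [Lplus hI he1 (-lam c d) a, Lplus hI hd (-lam b d) a,
    rho_neg hI he2 a, rho_neg hI he3 a]
  -- value substitutions
  have hρd : qh I (SkewBrace.star d a) = -qh I d + qh I (circ d a + -a) := by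
    simp only [SkewBrace.star, map_add, map_sub, map_neg, sub_eq_add_neg, add_assoc]
  rw [deltaLem hI hd (b + c) a, deltaLem hI hd c a, deltaLem hI hd b a, hρd]
  rw [LamDiamond hI hd b c, LamDiamond hI hf b c]
  simp only [neg_add_rev, neg_neg, add_assoc]
  have c1 := cent (x := lam c d) he2; have c1n := ncent c1
  have c2 := cent (x := lam b d) he3; have c2n := ncent c2
  have c3 := cent (x := d) hd; have c3n := ncent c3
  have c4 := cent (x := circ d a + -a) hf; have c4n := ncent c4
  have c5 := cent_lam hI hf b; have c5n := ncent c5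
  have c6 := cent_lam hI hf c; have c6n := ncent c6
  simp only [cmove c1, c1, add_assoc]
  simp only [cmove c1n, c1n, add_assoc]
  simp only [cmove c2, c2, add_assoc]
  simp only [cmove c2n, c2n, add_assoc]
  simp only [cmove c3, c3, add_assoc]
  simp only [cmove c3n, c3n, add_assoc]
  simp only [cmove c4, c4, add_assoc]
  simp only [cmove c4n, c4n, add_assoc]
  simp only [cmove c5, c5, add_assoc]
  simp only [cmove c5n, c5n, add_assoc]
  simp only [cmove c6, c6, add_assoc]
  simp only [cmove c6n, c6n, add_assoc]
  simp only [add_assoc, add_neg_cancel_left, neg_add_cancel_left, add_neg_cancel,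
    neg_add_cancel, add_zero, zero_add, neg_neg, neg_add_rev]

private lemma Bcomm {i : A} (hi : i ∈ I) (g a : A) :
    qh I (SkewBrace.star (i + g - i - g) a) = 0 := by
  have hig : g + i - g ∈ I := hI.1 g i hi
  have e : i + g - i - g = i + -(g + i - g) := by
    simp [sub_eq_add_neg, add_assoc, neg_add_rev]
  rw [e, Lplus hI hi _ a, rho_neg hI hig a, rho_conj hI hi g a]
  simp

private lemma SRbase (a : A) {s : A} (hs : s ∈ SS I) : SkewBrace.star s a ∈ JJ I := by
  apply mem_of_q_zero (I := I)
  rcases hs with ⟨b, c, d, h, rfl⟩ | ⟨i, hi, g, rfl⟩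
  · rcases h with hb | hc | hd
    · exact BrdB hI hb c d a
    · exact BrdC hI hc b d a
    · exact BrdD hI hd b c a
  · exact Bcomm hI hi g a

private lemma SR (a : A) {x : A} (hx : x ∈ JJ I) : SkewBrace.star x a ∈ JJ I := by
  refine AddSubgroup.closure_induction
    (p := fun y _ => SkewBrace.star y a ∈ JJ I) ?_ ?_ ?_ ?_ hx
  · intro s hs; exact SRbase hI a hs
  · show SkewBrace.star 0 a ∈ JJ I
    rw [zero_star]; exact zero_mem _
  · intro x y hx' hy' ihx ihy
    show SkewBrace.star (x + y) a ∈ JJ I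
    have hxI : x ∈ I := J_le_I hI hx'
    have hrd : rd x y a ∈ JJ I := rd_mem_J I (Or.inl hxI)
    have hT : -x + rd x y a + x ∈ JJ I := by
      simpa [sub_eq_add_neg] using J_norm hI (-x) _ hrd
    rw [idenIII x y a]
    have e2 : -y + (-x + rd x y a + x) + SkewBrace.star x a + y + SkewBrace.star y a =
        (-y + ((-x + rd x y a + x) + SkewBrace.star x a) - -y) + SkewBrace.star y a := by
      simp [sub_eq_add_neg, add_assoc]
    rw [e2]
    exact add_mem (J_norm hI (-y) _ (add_mem hT ihx)) ihy
  · intro x hx' ihx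
    show SkewBrace.star (-x) a ∈ JJ I
    have hxI : x ∈ I := J_le_I hI hx'
    have hrd : rd x (-x) a ∈ JJ I := rd_mem_J I (Or.inl hxI)
    have hT : -x + rd x (-x) a + x ∈ JJ I := by
      simpa [sub_eq_add_neg] using J_norm hI (-x) _ hrd
    have h := idenIII x (-x) a
    rw [add_neg_cancel, zero_star] at h
    have h2 : SkewBrace.star (-x) a =
        -(-(-x) + (-x + rd x (-x) a + x) + SkewBrace.star x a + -x) :=
      eq_neg_of_add_eq_zero_right h.symm
    have hbig : -(-x) + (-x + rd x (-x) a + x) + SkewBrace.star x a + -x =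
        x + ((-x + rd x (-x) a + x) + SkewBrace.star x a) - x := by
      simp [sub_eq_add_neg, add_assoc]
    rw [h2, hbig]
    exact neg_mem (J_norm hI x _ (add_mem hT ihx))

end RhoSec
theorem stmt5 {A : Type*} [SkewBrace A] (I : AddSubgroup A) (hI : IsIdeal I) :
    IsIdeal (AddSubgroup.closure
      ({x : A | ∃ a b c : A, (a ∈ I ∨ b ∈ I ∨ c ∈ I) ∧ x = rd a b c} ∪
       {x : A | ∃ a ∈ I, ∃ b : A, x = a + b - a - b})) := by
  haveI : (JJ I).Normal := J_normal hI
  show IsIdeal (JJ I)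
  exact ⟨fun g x hx => J_norm hI g x hx,
    fun a x hx => SL hI a hx,
    fun a x hx => SR hI a hx⟩
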